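/- For 0 < q < 1, α > −1, β > −1, μ > 0, x ∈ (0,1], the left-sided q-fractional integral of t ↦ t^α p_n(t; q^α, q^β | q) equals (Γ_q(α+1)/Γ_q(μ+α+1)) x^{α+μ} p_n(x; q^{α+μ}, q^{β−μ} | q), where p_n is the little q-Jacobi polynomial. -/

import Mathlib

open Filter

noncomputable section

namespace QFrac

variable (q : ℝ)

/-- infinite q-shifted factorial `(z;q)_∞` -/
def pochInf (z : ℝ) : ℝ := ∏' n : ℕ, (1 - z * q ^ n)

/-- generalized q-shifted factorial `(z;q)_ν = (z;q)_∞ / (z q^ν;q)_∞` -/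
def poch (z ν : ℝ) : ℝ := pochInf q z / pochInf q (z * q ^ ν)

/-- finite q-shifted factorial `(z;q)_k` -/
def pochN (z : ℝ) (k : ℕ) : ℝ := ∏ i ∈ Finset.range k, (1 - z * q ^ i)

/-- q-Gamma function -/
def qGamma (α : ℝ) : ℝ := pochInf q q / pochInf q (q ^ α) * (1 - q) ^ (1 - α)

/-- Jackson q-integral `∫_0^a f(t) d_q t` -/
def jackson (a : ℝ) (f : ℝ → ℝ) : ℝ := (1 - q) * a * ∑' n : ℕ, q ^ n * f (a * q ^ n)

/-- Jackson q-integral `∫_c^b f(t) d_q t` -/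
def jacksonI (c b : ℝ) (f : ℝ → ℝ) : ℝ := jackson q b f - jackson q c f

/-- left-sided Riemann–Liouville q-fractional integral `I^α_{q,0^+}` -/
def Ileft (α : ℝ) (f : ℝ → ℝ) (x : ℝ) : ℝ :=
  x ^ (α - 1) / qGamma q α * jackson q x (fun t => poch q (q * t / x) (α - 1) * f t)

/-- right-sided Riemann–Liouville q-fractional integral `I^α_{q,b^-}` -/
def Iright (b α : ℝ) (f : ℝ → ℝ) (x : ℝ) : ℝ :=
  (qGamma q α)⁻¹ *
    jacksonI q (q * x) b (fun t => t ^ (α - 1) * poch q (q * x / t) (α - 1) * f t)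

/-- Jackson q-derivative -/
def Dq (f : ℝ → ℝ) (x : ℝ) : ℝ := (f x - f (q * x)) / ((1 - q) * x)

/-- Jackson `q⁻¹`-derivative -/
def Dqinv (f : ℝ → ℝ) (x : ℝ) : ℝ := (f x - f (x / q)) / ((1 - q⁻¹) * x)

/-- left-sided Caputo q-fractional derivative of order `α ∈ (0,1)` -/
def CDleft (α : ℝ) (f : ℝ → ℝ) : ℝ → ℝ := Ileft q (1 - α) (Dq q f)

/-- left-sided Riemann–Liouville q-fractional derivative of order `α ∈ (0,1)` -/
def DRLleft (α : ℝ) (f : ℝ → ℝ) : ℝ → ℝ := Dq q (Ileft q (1 - α) f)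

/-- right-sided Riemann–Liouville q-fractional derivative of order `α ∈ (0,1)` -/
def DRLright (b α : ℝ) (f : ℝ → ℝ) (x : ℝ) : ℝ :=
  (-1 / q) * Dqinv q (fun t => Iright q b (1 - α) f t) x

/-- right-sided Caputo q-fractional derivative of order `α ∈ (0,1)` -/
def CDright (b α : ℝ) (f : ℝ → ℝ) (x : ℝ) : ℝ :=
  (-1 / q) * Iright q b (1 - α) (Dqinv q f) x

/-- `f ∈ L¹_q(A^*_{q,a})` -/
def MemL1 (a : ℝ) (f : ℝ → ℝ) : Prop := Summable (fun n : ℕ => q ^ n * |f (a * q ^ n)|)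

/-- `f ∈ L²_q(A^*_{q,a})` -/
def MemL2 (a : ℝ) (f : ℝ → ℝ) : Prop := Summable (fun n : ℕ => q ^ n * (f (a * q ^ n)) ^ 2)

/-- the `L²_q` norm -/
def norm2 (a : ℝ) (f : ℝ → ℝ) : ℝ := Real.sqrt (jackson q a (fun t => (f t) ^ 2))

/-- `f` is q-regular at zero (its value at `0` is the limit along the q-grid) -/
def qRegular (a : ℝ) (f : ℝ → ℝ) : Prop :=
  Tendsto (fun n : ℕ => f (a * q ^ n)) atTop (nhds (f 0))

/-- the limit at zero along the q-grid exists -/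
def qRegular' (a : ℝ) (f : ℝ → ℝ) : Prop :=
  ∃ L : ℝ, Tendsto (fun n : ℕ => f (a * q ^ n)) atTop (nhds L)

/-- sup norm on `A^*_{q,a}` -/
def supNorm (a : ℝ) (f : ℝ → ℝ) : ℝ := max (⨆ n : ℕ, |f (a * q ^ n)|) |f 0|

/-- bounded q-variation part of q-absolute continuity -/
def qACvar (a : ℝ) (f : ℝ → ℝ) : Prop :=
  ∃ K : ℝ, ∀ m N : ℕ,
    ∑ j ∈ Finset.range N, |f (a * q ^ (m + j)) - f (a * q ^ (m + j + 1))| ≤ K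

/-- q-absolute continuity on `A^*_{q,a}` -/
def qAC (a : ℝ) (f : ℝ → ℝ) : Prop := qRegular q a f ∧ qACvar q a f

/-- little q-Jacobi polynomial `p_n(x; q^A, q^B | q)` -/
def littleJacobi (n : ℕ) (A B x : ℝ) : ℝ :=
  ∑ k ∈ Finset.range (n + 1),
    pochN q (q ^ (-(n : ℝ))) k * pochN q (q ^ (A + B + (n : ℝ) + 1)) k /
      (pochN q (q ^ (A + 1)) k * pochN q q k) * (q * x) ^ k

end QFrac

namespace QFracAux
open QFrac Real

variable {q : ℝ}

lemma factor_pos (hq : 0 < q) (hq1 : q < 1) {z : ℝ} (hz0 : 0 ≤ z) (hz1 : z < 1) (n : ℕ) :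
    0 < 1 - z * q ^ n := by
  have h1 : q ^ n ≤ 1 := pow_le_one₀ hq.le (le_of_lt (by linarith))
  nlinarith [pow_pos hq n]

lemma summable_log (hq : 0 < q) (hq1 : q < 1) {z : ℝ} (hz0 : 0 ≤ z) (hz1 : z < 1) :
    Summable fun n : ℕ => Real.log (1 - z * q ^ n) := by
  have hb : ∀ n : ℕ, ‖Real.log (1 - z * q ^ n)‖ ≤ (1 - z)⁻¹ * q ^ n := by
    intro n
    have hpos := factor_pos hq hq1 hz0 hz1 n
    have hqn1 : q ^ n ≤ 1 := pow_le_one₀ hq.le hq1.le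
    have hle : z * q ^ n ≤ z := by nlinarith
    have hlog : Real.log (1 - z * q ^ n) ≤ 0 :=
      Real.log_nonpos (by positivity) (by nlinarith [mul_nonneg hz0 (pow_pos hq n).le])
    rw [Real.norm_eq_abs, abs_of_nonpos hlog]
    have : -Real.log (1 - z * q ^ n) = Real.log (1 - z * q ^ n)⁻¹ := by
      rw [Real.log_inv]
    rw [this]
    have h2 : Real.log (1 - z * q ^ n)⁻¹ ≤ (1 - z * q ^ n)⁻¹ - 1 :=
      Real.log_le_sub_one_of_pos (by positivity)
    have h3 : (1 - z * q ^ n)⁻¹ - 1 = z * q ^ n / (1 - z * q ^ n) := by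
      field_simp
      ring
    have h4 : z * q ^ n / (1 - z * q ^ n) ≤ z * q ^ n / (1 - z) := by
      apply div_le_div_of_nonneg_left (by positivity) (by linarith) (by nlinarith [pow_pos hq n])
    have h5 : z * q ^ n / (1 - z) ≤ (1 - z)⁻¹ * q ^ n := by
      rw [div_eq_inv_mul]
      have h6 : z * q ^ n ≤ q ^ n := by nlinarith [pow_pos hq n]
      exact mul_le_mul_of_nonneg_left h6 (inv_nonneg.mpr (by linarith))
    linarith
  exact Summable.of_norm_bounded ((summable_geometric_of_lt_one hq.le hq1).mul_left _) hb

lemma hasProd_pochInf (hq : 0 < q) (hq1 : q < 1) {z : ℝ} (hz0 : 0 ≤ z) (hz1 : z < 1) :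
    HasProd (fun n : ℕ => 1 - z * q ^ n) (pochInf q z) :=
  (Real.multipliable_of_summable_log (f := fun n => 1 - z * q ^ n)
    (fun n => factor_pos hq hq1 hz0 hz1 n)
    (summable_log hq hq1 hz0 hz1)).hasProd

lemma multipliable_pochInf (hq : 0 < q) (hq1 : q < 1) {z : ℝ} (hz0 : 0 ≤ z) (hz1 : z < 1) :
    Multipliable (fun n : ℕ => 1 - z * q ^ n) :=
  ⟨_, hasProd_pochInf hq hq1 hz0 hz1⟩

lemma pochInf_eq_exp (hq : 0 < q) (hq1 : q < 1) {z : ℝ} (hz0 : 0 ≤ z) (hz1 : z < 1) :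
    pochInf q z = Real.exp (∑' n : ℕ, Real.log (1 - z * q ^ n)) := by
  have := Real.rexp_tsum_eq_tprod (f := fun n => 1 - z * q ^ n)
    (fun n => factor_pos hq hq1 hz0 hz1 n)
    (summable_log hq hq1 hz0 hz1)
  exact this.symm

lemma pochInf_pos (hq : 0 < q) (hq1 : q < 1) {z : ℝ} (hz0 : 0 ≤ z) (hz1 : z < 1) :
    0 < pochInf q z := by
  rw [pochInf_eq_exp hq hq1 hz0 hz1]; exact Real.exp_pos _

lemma pochInf_le_one (hq : 0 < q) (hq1 : q < 1) {z : ℝ} (hz0 : 0 ≤ z) (hz1 : z < 1) :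
    pochInf q z ≤ 1 := by
  rw [pochInf_eq_exp hq hq1 hz0 hz1, Real.exp_le_one_iff]
  apply tsum_nonpos
  intro n
  exact Real.log_nonpos (factor_pos hq hq1 hz0 hz1 n).le
    (by nlinarith [mul_nonneg hz0 (pow_pos hq n).le])

lemma pochN_pos (hq : 0 < q) (hq1 : q < 1) {z : ℝ} (hz0 : 0 ≤ z) (hz1 : z < 1) (k : ℕ) :
    0 < pochN q z k :=
  Finset.prod_pos fun i _ => factor_pos hq hq1 hz0 hz1 i

lemma pochN_le_one (hq : 0 < q) (hq1 : q < 1) {z : ℝ} (hz0 : 0 ≤ z) (hz1 : z < 1) (k : ℕ) :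
    pochN q z k ≤ 1 := by
  unfold pochN
  apply Finset.prod_le_one
  · exact fun i _ => (factor_pos hq hq1 hz0 hz1 i).le
  · exact fun i _ => by nlinarith [mul_nonneg hz0 (pow_pos hq i).le]

lemma pochInf_split (hq : 0 < q) (hq1 : q < 1) {z : ℝ} (hz0 : 0 ≤ z) (hz1 : z < 1) (k : ℕ) :
    pochInf q z = pochN q z k * pochInf q (z * q ^ k) := by
  have hzk0 : 0 ≤ z * q ^ k := mul_nonneg hz0 (pow_pos hq k).le
  have hzk1 : z * q ^ k < 1 := by
    have : q ^ k ≤ 1 := pow_le_one₀ hq.le hq1.le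
    nlinarith [pow_pos hq k]
  have hm := multipliable_pochInf hq hq1 hzk0 hzk1
  have hfun : (fun i : ℕ => 1 - z * q ^ k * q ^ i) = fun i : ℕ => 1 - z * q ^ (i + k) := by
    funext i; rw [pow_add]; ring
  unfold pochInf pochN
  rw [hfun] at hm ⊢
  exact (Multipliable.prod_mul_tprod_nat_mul' (f := fun n : ℕ => 1 - z * q ^ n) (k := k) hm).symm

/-- coefficient of the q-binomial series -/
def cf (q a : ℝ) (m : ℕ) : ℝ := pochN q a m / pochN q q m

lemma cf_zero (q a : ℝ) : cf q a 0 = 1 := by simp [cf, pochN]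

lemma cf_pos (hq : 0 < q) (hq1 : q < 1) {a : ℝ} (ha0 : 0 ≤ a) (ha1 : a < 1) (m : ℕ) :
    0 < cf q a m :=
  div_pos (pochN_pos hq hq1 ha0 ha1 m) (pochN_pos hq hq1 hq.le hq1 m)

lemma pochN_q_ge (hq : 0 < q) (hq1 : q < 1) (m : ℕ) :
    pochInf q q ≤ pochN q q m := by
  have hsplit := pochInf_split hq hq1 hq.le hq1 m
  have hzk0 : 0 ≤ q * q ^ m := by positivity
  have hzk1 : q * q ^ m < 1 := by
    have h1 : q ^ m ≤ 1 := pow_le_one₀ hq.le hq1.le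
    nlinarith [pow_pos hq m]
  have h1 := pochInf_le_one hq hq1 hzk0 hzk1
  have h2 := pochN_pos hq hq1 hq.le hq1 m
  nlinarith

lemma cf_le (hq : 0 < q) (hq1 : q < 1) {a : ℝ} (ha0 : 0 ≤ a) (ha1 : a < 1) (m : ℕ) :
    cf q a m ≤ (pochInf q q)⁻¹ := by
  have h1 := pochN_le_one hq hq1 ha0 ha1 m
  have h2 := pochN_q_ge hq hq1 m
  have h3 := pochInf_pos hq hq1 hq.le hq1
  have h4 := pochN_pos hq hq1 ha0 ha1 m
  rw [cf, div_le_iff₀ (by linarith)]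
  calc pochN q a m ≤ 1 := h1
    _ ≤ (pochInf q q)⁻¹ * pochN q q m := by
        rw [one_le_inv_mul₀ h3]
        exact h2

lemma summable_cf (hq : 0 < q) (hq1 : q < 1) {a : ℝ} (ha0 : 0 ≤ a) (ha1 : a < 1)
    {w : ℝ} (hw0 : 0 ≤ w) (hw1 : w < 1) :
    Summable (fun m : ℕ => cf q a m * w ^ m) := by
  apply Summable.of_nonneg_of_le
    (fun m => mul_nonneg (cf_pos hq hq1 ha0 ha1 m).le (pow_nonneg hw0 m))
    (fun m => mul_le_mul_of_nonneg_right (cf_le hq hq1 ha0 ha1 m) (pow_nonneg hw0 m))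
  exact (summable_geometric_of_lt_one hw0 hw1).mul_left _

/-- the q-binomial series -/
def hf (q a w : ℝ) : ℝ := ∑' m : ℕ, cf q a m * w ^ m

lemma cf_rec (hq : 0 < q) (hq1 : q < 1) (a : ℝ) (m : ℕ) :
    cf q a (m + 1) * (1 - q ^ (m + 1)) = cf q a m * (1 - a * q ^ m) := by
  have hne : pochN q q m ≠ 0 := (pochN_pos hq hq1 hq.le hq1 m).ne'
  have hne2 : (1 : ℝ) - q * q ^ m ≠ 0 := by
    have h1 : q ^ m ≤ 1 := pow_le_one₀ hq.le hq1.le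
    have := pow_pos hq m
    nlinarith
  unfold cf pochN
  rw [Finset.prod_range_succ, Finset.prod_range_succ]
  unfold pochN at hne
  rw [show (1:ℝ) - q ^ (m + 1) = 1 - q * q ^ m by ring]
  rw [div_mul_eq_mul_div, div_mul_eq_mul_div, div_eq_div_iff (mul_ne_zero hne hne2) hne]
  ring

lemma hf_funeq (hq : 0 < q) (hq1 : q < 1) {a : ℝ} (ha0 : 0 ≤ a) (ha1 : a < 1)
    {w : ℝ} (hw0 : 0 ≤ w) (hw1 : w < 1) :
    (1 - w) * hf q a w = (1 - a * w) * hf q a (q * w) := by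
  have hqw0 : 0 ≤ q * w := by positivity
  have hqw1 : q * w < 1 := by nlinarith
  have S1 := summable_cf hq hq1 ha0 ha1 hw0 hw1
  have S2 := summable_cf hq hq1 ha0 ha1 hqw0 hqw1
  have SA : Summable fun m : ℕ => cf q a (m + 1) * w ^ (m + 1) :=
    (summable_nat_add_iff (f := fun m : ℕ => cf q a m * w ^ m) 1).2 S1
  have SB : Summable fun m : ℕ => cf q a m * w ^ (m + 1) :=
    (S1.mul_left w).congr fun m => by ring
  have SC : Summable fun m : ℕ => cf q a (m + 1) * (q * w) ^ (m + 1) :=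
    (summable_nat_add_iff (f := fun m : ℕ => cf q a m * (q * w) ^ m) 1).2 S2
  have SD : Summable fun m : ℕ => a * (cf q a m * q ^ m * w ^ (m + 1)) :=
    (S2.mul_left (a * w)).congr fun m => by rw [mul_pow]; ring
  have e1 : hf q a w = 1 + ∑' m : ℕ, cf q a (m + 1) * w ^ (m + 1) := by
    rw [hf, Summable.tsum_eq_zero_add S1]; simp [cf_zero]
  have e2 : w * hf q a w = ∑' m : ℕ, cf q a m * w ^ (m + 1) := by
    rw [hf, ← tsum_mul_left]; exact tsum_congr fun m => by ring
  have e3 : hf q a (q * w) = 1 + ∑' m : ℕ, cf q a (m + 1) * (q * w) ^ (m + 1) := by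
    rw [hf, Summable.tsum_eq_zero_add S2]; simp [cf_zero]
  have e4 : a * w * hf q a (q * w) = ∑' m : ℕ, a * (cf q a m * q ^ m * w ^ (m + 1)) := by
    rw [hf, ← tsum_mul_left]; exact tsum_congr fun m => by rw [mul_pow]; ring
  have key : (fun m : ℕ => cf q a (m + 1) * w ^ (m + 1) - cf q a m * w ^ (m + 1))
      = fun m : ℕ => cf q a (m + 1) * (q * w) ^ (m + 1) - a * (cf q a m * q ^ m * w ^ (m + 1)) := by
    funext m
    have h := cf_rec hq hq1 a m
    rw [mul_pow]
    linear_combination w ^ (m + 1) * h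
  have main : (∑' m : ℕ, cf q a (m + 1) * w ^ (m + 1)) - ∑' m : ℕ, cf q a m * w ^ (m + 1)
      = (∑' m : ℕ, cf q a (m + 1) * (q * w) ^ (m + 1))
        - ∑' m : ℕ, a * (cf q a m * q ^ m * w ^ (m + 1)) := by
    rw [← Summable.tsum_sub SA SB, ← Summable.tsum_sub SC SD, key]
  have expand : (1 - w) * hf q a w = hf q a w - w * hf q a w := by ring
  have expand2 : (1 - a * w) * hf q a (q * w) = hf q a (q * w) - a * w * hf q a (q * w) := by ring
  rw [expand, expand2, e2, e4, e1, e3]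
  linarith

lemma hf_iter (hq : 0 < q) (hq1 : q < 1) {a : ℝ} (ha0 : 0 ≤ a) (ha1 : a < 1)
    {w : ℝ} (hw0 : 0 ≤ w) (hw1 : w < 1) (N : ℕ) :
    pochN q w N * hf q a w = pochN q (a * w) N * hf q a (w * q ^ N) := by
  induction N with
  | zero => simp [pochN]
  | succ N ih =>
    have hwN0 : 0 ≤ w * q ^ N := by positivity
    have hwN1 : w * q ^ N < 1 := by
      have h1 : q ^ N ≤ 1 := pow_le_one₀ hq.le hq1.le
      nlinarith [pow_pos hq N]
    have hfe := hf_funeq hq hq1 ha0 ha1 hwN0 hwN1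
    have hstep : w * q ^ (N + 1) = q * (w * q ^ N) := by ring
    rw [hstep]
    unfold pochN at ih ⊢
    rw [Finset.prod_range_succ, Finset.prod_range_succ]
    linear_combination (1 - w * q ^ N) * ih
      + (∏ i ∈ Finset.range N, (1 - a * w * q ^ i)) * hfe

lemma hf_sub_one_bound (hq : 0 < q) (hq1 : q < 1) {a : ℝ} (ha0 : 0 ≤ a) (ha1 : a < 1)
    {w : ℝ} (hw0 : 0 ≤ w) (hw1 : w < 1) :
    |hf q a w - 1| ≤ (pochInf q q)⁻¹ * (1 - w)⁻¹ * w := by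
  have S1 := summable_cf hq hq1 ha0 ha1 hw0 hw1
  have SA : Summable fun m : ℕ => cf q a (m + 1) * w ^ (m + 1) :=
    (summable_nat_add_iff (f := fun m : ℕ => cf q a m * w ^ m) 1).2 S1
  have e1 : hf q a w - 1 = ∑' m : ℕ, cf q a (m + 1) * w ^ (m + 1) := by
    rw [hf, Summable.tsum_eq_zero_add S1]; simp [cf_zero]
  rw [e1]
  have hC := pochInf_pos hq hq1 hq.le hq1
  have habs : |∑' m : ℕ, cf q a (m + 1) * w ^ (m + 1)|
      ≤ ∑' m : ℕ, |cf q a (m + 1) * w ^ (m + 1)| := by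
    simpa only [Real.norm_eq_abs] using norm_tsum_le_tsum_norm (f := fun m : ℕ => cf q a (m + 1) * w ^ (m + 1)) (by simpa only [Real.norm_eq_abs] using SA.abs)
  refine habs.trans ?_
  have hb : ∀ m : ℕ, |cf q a (m + 1) * w ^ (m + 1)|
      ≤ ((pochInf q q)⁻¹ * w) * w ^ m := by
    intro m
    rw [abs_of_nonneg (mul_nonneg (cf_pos hq hq1 ha0 ha1 _).le (pow_nonneg hw0 _))]
    have h1 := cf_le hq hq1 ha0 ha1 (m + 1)
    have h2 : w ^ (m + 1) = w * w ^ m := by ring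
    rw [h2]
    have h3 : (0:ℝ) ≤ w * w ^ m := by positivity
    calc cf q a (m + 1) * (w * w ^ m) ≤ (pochInf q q)⁻¹ * (w * w ^ m) :=
          mul_le_mul_of_nonneg_right h1 h3
      _ = (pochInf q q)⁻¹ * w * w ^ m := by ring
  have hsum2 : Summable fun m : ℕ => ((pochInf q q)⁻¹ * w) * w ^ m :=
    (summable_geometric_of_lt_one hw0 hw1).mul_left _
  calc ∑' m : ℕ, |cf q a (m + 1) * w ^ (m + 1)|
      ≤ ∑' m : ℕ, ((pochInf q q)⁻¹ * w) * w ^ m :=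
        Summable.tsum_le_tsum hb (SA.abs) hsum2
    _ = ((pochInf q q)⁻¹ * w) * (1 - w)⁻¹ := by
        rw [tsum_mul_left, tsum_geometric_of_lt_one hw0 hw1]
    _ = (pochInf q q)⁻¹ * (1 - w)⁻¹ * w := by ring

lemma hf_tendsto_one (hq : 0 < q) (hq1 : q < 1) {a : ℝ} (ha0 : 0 ≤ a) (ha1 : a < 1)
    {w : ℝ} (hw0 : 0 ≤ w) (hw1 : w < 1) :
    Tendsto (fun N : ℕ => hf q a (w * q ^ N)) atTop (nhds 1) := by
  have key : ∀ N : ℕ, ‖hf q a (w * q ^ N) - 1‖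
      ≤ ((pochInf q q)⁻¹ * (1 - w)⁻¹ * w) * q ^ N := by
    intro N
    have hwN0 : 0 ≤ w * q ^ N := by positivity
    have hqN1 : q ^ N ≤ 1 := pow_le_one₀ hq.le hq1.le
    have hwN1 : w * q ^ N < 1 := by nlinarith [pow_pos hq N]
    have hb := hf_sub_one_bound hq hq1 ha0 ha1 hwN0 hwN1
    have hmono : (1 - w * q ^ N)⁻¹ ≤ (1 - w)⁻¹ := by
      apply inv_anti₀ (by linarith)
      nlinarith [pow_pos hq N]
    have hCpos : (0:ℝ) < (pochInf q q)⁻¹ := by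
      have := pochInf_pos hq hq1 hq.le hq1; positivity
    rw [Real.norm_eq_abs]
    calc |hf q a (w * q ^ N) - 1| ≤ (pochInf q q)⁻¹ * (1 - w * q ^ N)⁻¹ * (w * q ^ N) := hb
      _ ≤ (pochInf q q)⁻¹ * (1 - w)⁻¹ * (w * q ^ N) := by
          apply mul_le_mul_of_nonneg_right _ (by positivity)
          exact mul_le_mul_of_nonneg_left hmono hCpos.le
      _ = ((pochInf q q)⁻¹ * (1 - w)⁻¹ * w) * q ^ N := by ring
  have hlim : Tendsto (fun N : ℕ => ((pochInf q q)⁻¹ * (1 - w)⁻¹ * w) * q ^ N)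
      atTop (nhds 0) := by
    simpa using (tendsto_pow_atTop_nhds_zero_of_lt_one hq.le hq1).const_mul
      ((pochInf q q)⁻¹ * (1 - w)⁻¹ * w)
  have h0 : Tendsto (fun N : ℕ => hf q a (w * q ^ N) - 1) atTop (nhds 0) :=
    squeeze_zero_norm key hlim
  have := h0.add_const 1
  simpa using this

theorem qbinom (hq : 0 < q) (hq1 : q < 1) {a z : ℝ} (ha0 : 0 ≤ a) (ha1 : a < 1)
    (hz0 : 0 ≤ z) (hz1 : z < 1) :
    hf q a z = pochInf q (a * z) / pochInf q z := by
  have haz0 : 0 ≤ a * z := mul_nonneg ha0 hz0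
  have haz1 : a * z < 1 := by nlinarith
  have t1 : Tendsto (fun N : ℕ => pochN q z N * hf q a z) atTop
      (nhds (pochInf q z * hf q a z)) := by
    exact ((hasProd_pochInf hq hq1 hz0 hz1).tendsto_prod_nat).mul_const _
  have t2 : Tendsto (fun N : ℕ => pochN q (a * z) N * hf q a (z * q ^ N)) atTop
      (nhds (pochInf q (a * z) * 1)) := by
    exact ((hasProd_pochInf hq hq1 haz0 haz1).tendsto_prod_nat).mul
      (hf_tendsto_one hq hq1 ha0 ha1 hz0 hz1)
  have t1' : Tendsto (fun N : ℕ => pochN q (a * z) N * hf q a (z * q ^ N)) atTop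
      (nhds (pochInf q z * hf q a z)) := by
    apply t1.congr
    intro N
    exact hf_iter hq hq1 ha0 ha1 hz0 hz1 N
  have huniq := tendsto_nhds_unique t1' t2
  have hpz := pochInf_pos hq hq1 hz0 hz1
  field_simp
  linarith [huniq]

lemma rpow_mul_pow (hq : 0 < q) (s : ℝ) (k : ℕ) : q ^ s * q ^ k = q ^ (s + (k : ℝ)) := by
  rw [← Real.rpow_natCast q k, ← Real.rpow_add hq]

lemma qexp_pos (hq : 0 < q) (s : ℝ) : 0 < q ^ s := Real.rpow_pos_of_pos hq s

lemma qexp_lt_one (hq : 0 < q) (hq1 : q < 1) {s : ℝ} (hs : 0 < s) : q ^ s < 1 :=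
  Real.rpow_lt_one hq.le hq1 hs

lemma pochInf_split_rpow (hq : 0 < q) (hq1 : q < 1) {s t : ℝ} (hs : 0 < s)
    (k : ℕ) (hts : t = s + (k : ℝ)) :
    pochInf q (q ^ s) = pochN q (q ^ s) k * pochInf q (q ^ t) := by
  have h := pochInf_split hq hq1 (qexp_pos hq s).le (qexp_lt_one hq hq1 hs) k
  rw [h, rpow_mul_pow hq s k, hts]

/-- the coefficient appearing after expanding the q-fractional integral of the
little q-Jacobi polynomial -/
def coefD (q α β μ : ℝ) (n : ℕ) (x : ℝ) (k : ℕ) : ℝ :=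
  pochN q (q ^ (-(n : ℝ))) k * pochN q (q ^ (α + β + (n : ℝ) + 1)) k /
      (pochN q (q ^ (α + 1)) k * pochN q q k) *
    ((q * x) ^ k * x ^ α * (pochInf q q / pochInf q (q ^ μ)))

lemma summand_eq (hq : 0 < q) (hq1 : q < 1) {α β μ x : ℝ} (hμ : 0 < μ)
    (n : ℕ) (hx0 : 0 < x) (m : ℕ) :
    q ^ m * (poch q (q * (x * q ^ m) / x) (μ - 1) *
        ((x * q ^ m) ^ α * littleJacobi q n α β (x * q ^ m)))
      = ∑ k ∈ Finset.range (n + 1),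
          coefD q α β μ n x k * (cf q (q ^ μ) m * (q ^ (α + (k : ℝ) + 1)) ^ m) := by
  have hxne : x ≠ 0 := hx0.ne'
  have harg : q * (x * q ^ m) / x = q * q ^ m := by field_simp
  have hqμ0 : (0:ℝ) ≤ q ^ μ := (qexp_pos hq μ).le
  have hqμ1 : q ^ μ < 1 := qexp_lt_one hq hq1 hμ
  have hPqm := pochN_pos hq hq1 hq.le hq1 m
  have hPμm := pochN_pos hq hq1 hqμ0 hqμ1 m
  have hQμ := pochInf_pos hq hq1 hqμ0 hqμ1
  have hQq := pochInf_pos hq hq1 hq.le hq1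
  have e1 : pochInf q (q * q ^ m) = pochInf q q / pochN q q m := by
    rw [pochInf_split hq hq1 hq.le hq1 m]; field_simp
  have e2 : pochInf q (q ^ μ * q ^ m) = pochInf q (q ^ μ) / pochN q (q ^ μ) m := by
    rw [pochInf_split hq hq1 hqμ0 hqμ1 m]; field_simp
  have hexp : q * q ^ m * q ^ (μ - 1) = q ^ μ * q ^ m := by
    have h1 : q * q ^ m = q ^ ((m : ℝ) + 1) := by
      rw [Real.rpow_add hq, Real.rpow_one, Real.rpow_natCast]; ring
    rw [h1, ← Real.rpow_add hq, ← Real.rpow_natCast q m, ← Real.rpow_add hq]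
    congr 1; ring
  have epoch : poch q (q * (x * q ^ m) / x) (μ - 1)
      = pochInf q q / pochInf q (q ^ μ) * (pochN q (q ^ μ) m / pochN q q m) := by
    rw [poch, harg, hexp, e1, e2]
    field_simp
  have epow : (x * q ^ m) ^ α = x ^ α * q ^ ((m : ℝ) * α) := by
    rw [Real.mul_rpow hx0.le (pow_nonneg hq.le m), ← Real.rpow_natCast q m,
      ← Real.rpow_mul hq.le]
  have collect : ∀ k : ℕ, q ^ m * q ^ ((m : ℝ) * α) * (q ^ m) ^ k
      = (q ^ (α + (k : ℝ) + 1)) ^ m := by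
    intro k
    have h1 : q ^ m * q ^ ((m : ℝ) * α) * (q ^ m) ^ k = q ^ ((m : ℝ) * (α + (k : ℝ) + 1)) := by
      rw [← pow_mul, ← Real.rpow_natCast q m, ← Real.rpow_natCast q (m * k),
        ← Real.rpow_add hq, ← Real.rpow_add hq]
      congr 1
      push_cast
      ring
    have h2 : (q ^ (α + (k : ℝ) + 1)) ^ m = q ^ ((m : ℝ) * (α + (k : ℝ) + 1)) := by
      rw [← Real.rpow_natCast (q ^ (α + (k : ℝ) + 1)) m, ← Real.rpow_mul hq.le]
      congr 1
      ring
    rw [h1, h2]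
  rw [epoch, epow, littleJacobi, Finset.mul_sum, Finset.mul_sum, Finset.mul_sum]
  apply Finset.sum_congr rfl
  intro k _
  have hsplit : q * (x * q ^ m) = q * x * q ^ m := by ring
  rw [hsplit, mul_pow (q * x) (q ^ m) k]
  unfold coefD cf
  linear_combination (pochN q (q ^ (-(n : ℝ))) k * pochN q (q ^ (α + β + (n : ℝ) + 1)) k /
      (pochN q (q ^ (α + 1)) k * pochN q q k) * ((q * x) ^ k * x ^ α *
      (pochInf q q / pochInf q (q ^ μ))) * (pochN q (q ^ μ) m / pochN q q m)) * collect k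

lemma perk (hq : 0 < q) (hq1 : q < 1) {α μ x : ℝ} (hα : -1 < α) (hμ : 0 < μ)
    (hx0 : 0 < x) (Nk : ℝ) (k : ℕ) :
    x ^ (μ - 1) / qGamma q μ * ((1 - q) * x *
      ((Nk / (pochN q (q ^ (α + 1)) k * pochN q q k) *
        ((q * x) ^ k * x ^ α * (pochInf q q / pochInf q (q ^ μ)))) *
        (pochInf q (q ^ (μ + α + (k : ℝ) + 1)) / pochInf q (q ^ (α + (k : ℝ) + 1)))))
    = qGamma q (α + 1) / qGamma q (μ + α + 1) * x ^ (α + μ) *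
        (Nk / (pochN q (q ^ (α + μ + 1)) k * pochN q q k) * (q * x) ^ k) := by
  have hu : (0:ℝ) < 1 - q := by linarith
  have hα1 : (0:ℝ) < α + 1 := by linarith
  have hαμ1 : (0:ℝ) < α + μ + 1 := by linarith
  have hk0 : (0:ℝ) ≤ (k : ℝ) := Nat.cast_nonneg k
  have hαk1 : (0:ℝ) < α + (k : ℝ) + 1 := by linarith
  have hμαk1 : (0:ℝ) < μ + α + (k : ℝ) + 1 := by linarith
  have hA : pochInf q (q ^ (α + 1))
      = pochN q (q ^ (α + 1)) k * pochInf q (q ^ (α + (k : ℝ) + 1)) :=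
    pochInf_split_rpow hq hq1 hα1 k (by ring)
  have hB : pochInf q (q ^ (α + μ + 1))
      = pochN q (q ^ (α + μ + 1)) k * pochInf q (q ^ (μ + α + (k : ℝ) + 1)) :=
    pochInf_split_rpow hq hq1 hαμ1 k (by ring)
  have hswap : q ^ (μ + α + 1) = q ^ (α + μ + 1) := by rw [show μ + α + 1 = α + μ + 1 by ring]
  -- positivity of all atoms
  have hQq := pochInf_pos hq hq1 hq.le hq1
  have hQμ := pochInf_pos hq hq1 (qexp_pos hq μ).le (qexp_lt_one hq hq1 hμ)
  have hAk := pochInf_pos hq hq1 (qexp_pos hq _).le (qexp_lt_one hq hq1 hαk1)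
  have hBk := pochInf_pos hq hq1 (qexp_pos hq _).le (qexp_lt_one hq hq1 hμαk1)
  have hP1k := pochN_pos hq hq1 (qexp_pos hq (α+1)).le (qexp_lt_one hq hq1 hα1) k
  have hPμ1k := pochN_pos hq hq1 (qexp_pos hq (α+μ+1)).le (qexp_lt_one hq hq1 hαμ1) k
  have hPqk := pochN_pos hq hq1 hq.le hq1 k
  -- rpow rewrites for (1-q)
  have hu1 : (1 - q) ^ (1 - μ) = (1 - q) * ((1 - q) ^ μ)⁻¹ := by
    rw [show (1:ℝ) - μ = 1 + (-μ) by ring, Real.rpow_add hu, Real.rpow_one,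
      Real.rpow_neg hu.le]
  have hu2 : (1 - q) ^ (1 - (α + 1)) = (1 - q) ^ μ * (1 - q) ^ (-α - μ) := by
    rw [show (1:ℝ) - (α + 1) = μ + (-α - μ) by ring, Real.rpow_add hu]
  have hu3 : (1 - q) ^ (1 - (μ + α + 1)) = (1 - q) ^ (-α - μ) := by
    rw [show (1:ℝ) - (μ + α + 1) = -α - μ by ring]
  have hx1 : x ^ (α + μ) = x ^ (μ - 1) * x * x ^ α := by
    rw [show α + μ = (μ - 1) + 1 + α by ring, Real.rpow_add hx0, Real.rpow_add hx0,
      Real.rpow_one]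
  have huμ := Real.rpow_pos_of_pos hu μ
  have huαμ := Real.rpow_pos_of_pos hu (-α - μ)
  unfold qGamma
  rw [hswap, hA, hB, hu1, hu2, hu3, hx1]
  field_simp

end QFracAux

/-- left q-fractional integral of `t^α p_n(t;q^α,q^β|q)`. -/
theorem stmt17 (q α β μ : ℝ) (hq : 0 < q) (hq1 : q < 1)
    (hα : -1 < α) (hβ : -1 < β) (hμ : 0 < μ) (n : ℕ) (x : ℝ)
    (hx0 : 0 < x) (hx1 : x ≤ 1) :
    QFrac.Ileft q μ (fun t => t ^ α * QFrac.littleJacobi q n α β t) x =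
      QFrac.qGamma q (α + 1) / QFrac.qGamma q (μ + α + 1) * x ^ (α + μ) *
        QFrac.littleJacobi q n (α + μ) (β - μ) x := by
  open QFrac QFracAux in
  have hqμ0 : (0:ℝ) ≤ q ^ μ := (QFracAux.qexp_pos hq μ).le
  have hqμ1 : q ^ μ < 1 := QFracAux.qexp_lt_one hq hq1 hμ
  have hsummable : ∀ k ∈ Finset.range (n + 1), Summable (fun m : ℕ =>
      QFracAux.coefD q α β μ n x k * (QFracAux.cf q (q ^ μ) m * (q ^ (α + (k : ℝ) + 1)) ^ m)) := by
    intro k _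
    have hk0 : (0:ℝ) ≤ (k : ℝ) := Nat.cast_nonneg k
    have hαk1 : (0:ℝ) < α + (k : ℝ) + 1 := by linarith
    exact (QFracAux.summable_cf hq hq1 hqμ0 hqμ1 (QFracAux.qexp_pos hq _).le
      (QFracAux.qexp_lt_one hq hq1 hαk1)).mul_left _
  have key : ∑' m : ℕ, q ^ m * (QFrac.poch q (q * (x * q ^ m) / x) (μ - 1) *
      ((x * q ^ m) ^ α * QFrac.littleJacobi q n α β (x * q ^ m)))
      = ∑ k ∈ Finset.range (n + 1), QFracAux.coefD q α β μ n x k *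
          (QFrac.pochInf q (q ^ (μ + α + (k : ℝ) + 1)) /
            QFrac.pochInf q (q ^ (α + (k : ℝ) + 1))) := by
    rw [tsum_congr (QFracAux.summand_eq hq hq1 hμ n hx0), Summable.tsum_finsetSum hsummable]
    apply Finset.sum_congr rfl
    intro k _
    rw [tsum_mul_left]
    congr 1
    have hk0 : (0:ℝ) ≤ (k : ℝ) := Nat.cast_nonneg k
    have hαk1 : (0:ℝ) < α + (k : ℝ) + 1 := by linarith
    have hqb := QFracAux.qbinom hq hq1 hqμ0 hqμ1 (QFracAux.qexp_pos hq (α + (k:ℝ) + 1)).le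
      (QFracAux.qexp_lt_one hq hq1 hαk1)
    have : (∑' m : ℕ, QFracAux.cf q (q ^ μ) m * (q ^ (α + (k : ℝ) + 1)) ^ m)
        = QFracAux.hf q (q ^ μ) (q ^ (α + (k : ℝ) + 1)) := rfl
    rw [this, hqb, ← Real.rpow_add hq, show μ + (α + (k:ℝ) + 1) = μ + α + (k:ℝ) + 1 by ring]
  simp only [QFrac.Ileft, QFrac.jackson]
  rw [key, QFrac.littleJacobi,
    show α + μ + (β - μ) + (n : ℝ) + 1 = α + β + (n : ℝ) + 1 by ring,
    Finset.mul_sum, Finset.mul_sum, Finset.mul_sum]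
  apply Finset.sum_congr rfl
  intro k _
  unfold QFracAux.coefD
  exact QFracAux.perk hq hq1 hα hμ hx0
    (QFrac.pochN q (q ^ (-(n : ℝ))) k * QFrac.pochN q (q ^ (α + β + (n : ℝ) + 1)) k) k
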